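/- The product space ℚ × ℝ, where ℚ carries the subspace topology from ℝ and ℝ its usual topology, is not T-locally compact. -/
import Mathlib


def TLocallyCompact (X : Type*) [TopologicalSpace X] : Prop :=
  ∀ (x : X) (U : Set X), IsOpen U → x ∈ U →
    ∃ V : Set X, IsOpen V ∧ x ∈ V ∧ V ⊆ U ∧ IsCompact (frontier V)

theorem rat_prod_real_not_tLocallyCompact : ¬ TLocallyCompact (ℚ × ℝ) := by
  intro h
  -- the open set U = ℚ × (-1, 1)
  set U : Set (ℚ × ℝ) := {p | p.2 ∈ Set.Ioo (-1 : ℝ) 1} with hUdef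
  have hU : IsOpen U := isOpen_Ioo.preimage continuous_snd
  have h0U : ((0 : ℚ), (0 : ℝ)) ∈ U := by simp [hUdef]
  obtain ⟨V, hVo, hV0, hVU, hKc⟩ := h (0, 0) U hU h0U
  -- projection of the frontier to ℚ
  set Kq : Set ℚ := Prod.fst '' frontier V with hKqdef
  have hKq : IsCompact Kq := hKc.image continuous_fst
  -- the projection of V is contained in Kq
  have hsub : Prod.fst '' V ⊆ Kq := by
    rintro q ⟨p, hpV, rfl⟩
    set Vq : Set ℝ := {y | (p.1, y) ∈ V} with hVqdef
    have hVqo : IsOpen Vq := hVo.preimage (Continuous.prodMk_right p.1)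
    have hne : p.2 ∈ Vq := by simpa [hVqdef] using hpV
    have hbdd : BddAbove Vq := by
      refine ⟨1, fun y hy => ?_⟩
      have := hVU hy
      exact le_of_lt this.2
    set s := sSup Vq with hsdef
    have hscl : s ∈ closure Vq := csSup_mem_closure ⟨p.2, hne⟩ hbdd
    have hsnot : s ∉ Vq := by
      intro hs
      obtain ⟨ε, hε, hball⟩ := Metric.isOpen_iff.1 hVqo s hs
      have hmem : s + ε / 2 ∈ Vq := by
        apply hball
        rw [Metric.mem_ball, Real.dist_eq, show s + ε / 2 - s = ε / 2 by ring,
          abs_of_pos (by linarith : (0:ℝ) < ε/2)]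
        linarith
      have := le_csSup hbdd hmem
      linarith
    have hfr : (p.1, s) ∈ frontier V := by
      rw [frontier, hVo.interior_eq]
      constructor
      · exact (Continuous.prodMk_right p.1).closure_preimage_subset V hscl
      · exact hsnot
    exact ⟨(p.1, s), hfr, rfl⟩
  -- so Kq is a compact set in ℚ containing an open neighborhood of 0
  have hOopen : IsOpen (Prod.fst '' V) := isOpenMap_fst V hVo
  have hO0 : (0 : ℚ) ∈ Prod.fst '' V := ⟨(0, 0), hV0, rfl⟩
  obtain ⟨ε, hε, hball⟩ := Metric.isOpen_iff.1 hOopen 0 hO0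
  -- push to ℝ
  set K' : Set ℝ := (fun q : ℚ => (q : ℝ)) '' Kq with hK'def
  have hK'c : IsCompact K' := hKq.image Rat.continuous_coe_real
  have hK'closed : IsClosed K' := hK'c.isClosed
  have hballK' : ∀ q : ℚ, |(q : ℝ)| < ε → (q : ℝ) ∈ K' := by
    intro q hq
    refine ⟨q, hsub (hball ?_), rfl⟩
    rw [Metric.mem_ball, Rat.dist_eq]
    simpa using hq
  have hIoo : Set.Ioo (-ε) ε ⊆ K' := by
    intro x hx
    have hx' : x ∈ closure K' := by
      rw [mem_closure_iff]
      intro o ho hxo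
      have hne : (o ∩ Set.Ioo (-ε) ε).Nonempty := ⟨x, hxo, hx⟩
      obtain ⟨q, hq⟩ := Rat.denseRange_cast.exists_mem_open (ho.inter isOpen_Ioo) hne
      exact ⟨(q : ℝ), hq.1, hballK' q (abs_lt.2 ⟨hq.2.1, hq.2.2⟩)⟩
    rwa [hK'closed.closure_eq] at hx'
  -- but Ioo contains an irrational
  obtain ⟨x, hxirr, hxIoo⟩ := dense_irrational.exists_mem_open isOpen_Ioo ((Set.nonempty_Ioo (a := -ε) (b := ε)).2 (by linarith))
  obtain ⟨q, _, hq⟩ := hIoo hxIoo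
  exact hxirr ⟨q, hq⟩
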